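/- Let t < d be positive integers and let U be a d×t real matrix with rows u_1, …, u_d ∈ ℝ^t satisfying Σ_{i=1}^d u_i u_iᵀ = I_t (i.e., UᵀU = I_t). Then for every integer r with t < r ≤ d there exist nonnegative reals s_1, …, s_d, at most r of which are nonzero, such that every eigenvalue λ of the symmetric positive semidefinite t×t matrix Σ_{i=1}^d s_i u_i u_iᵀ satisfies (1−√(t/r))² ≤ λ ≤ (1+√(t/r))². -/

import Mathlib

open Matrix
set_option linter.unusedSectionVars false
set_option maxHeartbeats 1000000
variable {n : Type*} [Fintype n] [DecidableEq n]

lemma trace_mul_vecMulVec (M : Matrix n n ℝ) (v w : n → ℝ) :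
    trace (M * vecMulVec v w) = w ⬝ᵥ (M *ᵥ v) := by
  simp [trace, Matrix.mul_apply, vecMulVec_apply, dotProduct, mulVec, diag,
    Finset.mul_sum, mul_comm, mul_assoc, mul_left_comm]

lemma vecMulVec_mul_vecMulVec (v : n → ℝ) (M : Matrix n n ℝ) :
    vecMulVec v v * M * vecMulVec v v = (v ⬝ᵥ M *ᵥ v) • vecMulVec v v := by
  ext i j
  simp [Matrix.mul_apply, vecMulVec_apply, dotProduct, mulVec, Finset.mul_sum,
    Finset.sum_mul, mul_comm, mul_assoc, mul_left_comm]
  rw [Finset.sum_comm]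
  congr 1; ext a; congr 1; ext b; ring

lemma posSemidef_vecMulVec' (v : n → ℝ) : (vecMulVec v v).PosSemidef := by
  rw [Matrix.posSemidef_iff_dotProduct_mulVec]; constructor
  · ext i j; simp [vecMulVec_apply, mul_comm, IsHermitian]
  · intro x
    have : (star x) ⬝ᵥ (vecMulVec v v *ᵥ x) = (v ⬝ᵥ x) ^ 2 := by
      simp [dotProduct, mulVec, vecMulVec_apply, Finset.mul_sum, pow_two,
        Finset.sum_mul, mul_comm, mul_assoc, mul_left_comm]
    rw [this]; positivity
variable {n : Type*} [Fintype n] [DecidableEq n]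

lemma Matrix.PosSemidef.trace_nonneg' {M : Matrix n n ℝ} (hM : M.PosSemidef) : 0 ≤ trace M := by
  have h : ∀ i, 0 ≤ M i i := by
    intro i
    have := hM.dotProduct_mulVec_nonneg (Pi.single i 1)
    simpa [dotProduct, mulVec, Pi.single_apply] using this
  exact Finset.sum_nonneg fun i _ => h i

lemma Matrix.PosDef.trace_pos' {M : Matrix n n ℝ} [Nonempty n] (hM : M.PosDef) : 0 < trace M := by
  have h : ∀ i, 0 < M i i := by
    intro i
    have := hM.dotProduct_mulVec_pos (x := Pi.single i 1) (by simp [funext_iff]; exact ⟨i, by simp⟩)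
    simpa [dotProduct, mulVec, Pi.single_apply] using this
  exact Finset.sum_pos (fun i _ => h i) Finset.univ_nonempty

lemma symm_dot {M : Matrix n n ℝ} (hM : M.IsHermitian) (x y : n → ℝ) :
    y ⬝ᵥ M *ᵥ x = x ⬝ᵥ M *ᵥ y := by
  have hMt : ∀ i j, M i j = M j i := by
    intro i j
    have h2 : M j i = M i j := by
      have := congrFun (congrFun hM.symm j) i
      simpa using this
    exact h2.symm
  calc y ⬝ᵥ M *ᵥ x = ∑ i, ∑ j, y i * (M i j * x j) := by
        simp [dotProduct, mulVec, Finset.mul_sum]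
    _ = ∑ j, ∑ i, x j * (M j i * y i) := by
        rw [Finset.sum_comm]
        congr 1; ext i; congr 1; ext j; rw [hMt i j]; ring
    _ = x ⬝ᵥ M *ᵥ y := by simp [dotProduct, mulVec, Finset.mul_sum]

-- Cauchy-Schwarz for a PSD bilinear form
lemma psd_cauchy_schwarz {M : Matrix n n ℝ} (hM : M.PosSemidef) (x y : n → ℝ) :
    (x ⬝ᵥ M *ᵥ y) ^ 2 ≤ (x ⬝ᵥ M *ᵥ x) * (y ⬝ᵥ M *ᵥ y) := by
  have key : ∀ t : ℝ, 0 ≤ (y ⬝ᵥ M *ᵥ y) * (t * t) + (2 * (x ⬝ᵥ M *ᵥ y)) * t + (x ⬝ᵥ M *ᵥ x) := by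
    intro t
    have h := hM.dotProduct_mulVec_nonneg (x + t • y)
    have hsymm := symm_dot hM.1 x y
    simp only [star_trivial, add_dotProduct, smul_dotProduct, mulVec_add, mulVec_smul,
      dotProduct_add, dotProduct_smul, smul_eq_mul] at h
    rw [hsymm] at h
    nlinarith [h]
  have hd := discrim_le_zero key
  rw [discrim] at hd
  nlinarith [hd]
variable {n : Type*} [Fintype n] [DecidableEq n]

section
open scoped MatrixOrder

noncomputable def Matrix.PosSemidef.sqrt {M : Matrix n n ℝ} (_hM : M.PosSemidef) : Matrix n n ℝ :=
  CFC.sqrt M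

lemma Matrix.PosSemidef.posSemidef_sqrt {M : Matrix n n ℝ} (hM : M.PosSemidef) :
    hM.sqrt.PosSemidef :=
  (CFC.sqrt_nonneg M).posSemidef

lemma Matrix.PosSemidef.sqrt_mul_self {M : Matrix n n ℝ} (hM : M.PosSemidef) :
    hM.sqrt * hM.sqrt = M :=
  CFC.sqrt_mul_sqrt_self M hM.nonneg

end

lemma quad_le_trace {M : Matrix n n ℝ} (hM : M.PosSemidef) (x : n → ℝ) :
    x ⬝ᵥ M *ᵥ x ≤ trace M * (x ⬝ᵥ x) := by
  set R := hM.sqrt with hR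
  have hRsymm : Rᵀ = R := by
    have := hM.posSemidef_sqrt.isHermitian
    simpa [Matrix.IsHermitian] using this
  have h1 : x ⬝ᵥ M *ᵥ x = (R *ᵥ x) ⬝ᵥ (R *ᵥ x) := by
    rw [← hM.sqrt_mul_self, ← mulVec_mulVec, dotProduct_mulVec]
    congr 1
    conv_lhs => rw [← hR, ← hRsymm]
    rw [vecMul_transpose, hR]
  have h2 : trace M = ∑ i, ∑ j, (R i j) ^ 2 := by
    rw [← hM.sqrt_mul_self]
    simp only [trace, diag, Matrix.mul_apply]
    congr 1; ext i; congr 1; ext j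
    rw [sq]
    congr 1
    have := congrFun (congrFun hRsymm j) i
    simpa using this.symm
  rw [h1, h2]
  have h3 : ∀ i, ((R *ᵥ x) i)^2 ≤ (∑ j, R i j ^ 2) * (x ⬝ᵥ x) := by
    intro i
    have := Finset.sum_mul_sq_le_sq_mul_sq Finset.univ (fun j => R i j) x
    simpa [mulVec, dotProduct, sq] using this
  calc (R *ᵥ x) ⬝ᵥ (R *ᵥ x) = ∑ i, ((R *ᵥ x) i)^2 := by simp [dotProduct, sq]
    _ ≤ ∑ i, (∑ j, R i j ^ 2) * (x ⬝ᵥ x) := Finset.sum_le_sum fun i _ => h3 i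
    _ = (∑ i, ∑ j, R i j ^ 2) * (x ⬝ᵥ x) := by rw [Finset.sum_mul]

lemma trace_mul_sq_le (X Y : Matrix n n ℝ) :
    (trace (X * Y))^2 ≤ trace (X * Xᵀ) * trace (Yᵀ * Y) := by
  have h1 : trace (X * Y) = ∑ p : n × n, X p.1 p.2 * Y p.2 p.1 := by
    rw [Fintype.sum_prod_type]
    simp [trace, diag, Matrix.mul_apply]
  have h2 : trace (X * Xᵀ) = ∑ p : n × n, (X p.1 p.2) ^ 2 := by
    rw [Fintype.sum_prod_type]
    simp [trace, diag, Matrix.mul_apply, sq]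
  have h3 : trace (Yᵀ * Y) = ∑ p : n × n, (Y p.2 p.1) ^ 2 := by
    rw [Fintype.sum_prod_type]
    simp only [trace, diag, Matrix.mul_apply, transpose_apply, sq]
  rw [h1, h2, h3]
  exact Finset.sum_mul_sq_le_sq_mul_sq Finset.univ _ _

lemma Matrix.PosDef.mul_inv' {B : Matrix n n ℝ} (hB : B.PosDef) : B * B⁻¹ = 1 :=
  Matrix.mul_nonsing_inv B ((Matrix.isUnit_iff_isUnit_det B).mp hB.isUnit)

lemma Matrix.PosDef.inv_mul' {B : Matrix n n ℝ} (hB : B.PosDef) : B⁻¹ * B = 1 :=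
  Matrix.nonsing_inv_mul B ((Matrix.isUnit_iff_isUnit_det B).mp hB.isUnit)

/-- Sherman–Morrison. -/
lemma sherman_morrison {B : Matrix n n ℝ} (hB : B.PosDef) (a : ℝ) (v : n → ℝ)
    (h : 1 + a * (v ⬝ᵥ B⁻¹ *ᵥ v) ≠ 0) :
    (B + a • vecMulVec v v)⁻¹ =
      B⁻¹ - (a / (1 + a * (v ⬝ᵥ B⁻¹ *ᵥ v))) • (B⁻¹ * vecMulVec v v * B⁻¹) := by
  set q := v ⬝ᵥ B⁻¹ *ᵥ v with hq
  set c := a / (1 + a * q) with hc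
  set V := vecMulVec v v with hV
  apply Matrix.inv_eq_right_inv
  have hVBV : V * B⁻¹ * V = q • V := vecMulVec_mul_vecMulVec v B⁻¹
  have h1 : B * (c • (B⁻¹ * V * B⁻¹)) = c • (V * B⁻¹) := by
    rw [Matrix.mul_smul, ← Matrix.mul_assoc, ← Matrix.mul_assoc, hB.mul_inv', Matrix.one_mul]
  have hx : V * (B⁻¹ * V * B⁻¹) = q • (V * B⁻¹) := by
    calc V * (B⁻¹ * V * B⁻¹) = V * B⁻¹ * V * B⁻¹ := by simp only [Matrix.mul_assoc]
      _ = (q • V) * B⁻¹ := by rw [hVBV]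
      _ = q • (V * B⁻¹) := by rw [Matrix.smul_mul]
  have h3 : (a • V) * (c • (B⁻¹ * V * B⁻¹)) = (a * (c * q)) • (V * B⁻¹) := by
    rw [Matrix.smul_mul, Matrix.mul_smul, hx, smul_smul, smul_smul]
    congr 1
    ring
  have h2 : c * (1 + a * q) = a := div_mul_cancel₀ a h
  have hcoef : a - c - a * (c * q) = 0 := by linear_combination -h2
  rw [Matrix.add_mul, Matrix.mul_sub, hB.mul_inv', h1, Matrix.mul_sub (a • V), h3,
    Matrix.smul_mul]
  have hfin : (1 : Matrix n n ℝ) - c • (V * B⁻¹) + (a • (V * B⁻¹) - (a * (c * q)) • (V * B⁻¹)) =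
      1 + (a - c - a * (c * q)) • (V * B⁻¹) := by module
  rw [hfin, hcoef, zero_smul, add_zero]

lemma vecMulVec_mulVec (v x : n → ℝ) : vecMulVec v v *ᵥ x = (v ⬝ᵥ x) • v := by
  ext i
  simp [mulVec, vecMulVec_apply, dotProduct, Finset.mul_sum, mul_comm, mul_assoc, mul_left_comm]

lemma dot_vecMulVec (v x : n → ℝ) : x ⬝ᵥ (vecMulVec v v *ᵥ x) = (v ⬝ᵥ x)^2 := by
  rw [_root_.vecMulVec_mulVec, dotProduct_smul, smul_eq_mul, dotProduct_comm, sq]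

/-- key Cauchy–Schwarz: `(v ⬝ x)² ≤ (vᵀB⁻¹v)(xᵀBx)` for `B` posdef. -/
lemma dot_sq_le {B : Matrix n n ℝ} (hB : B.PosDef) (v x : n → ℝ) :
    (v ⬝ᵥ x)^2 ≤ (v ⬝ᵥ B⁻¹ *ᵥ v) * (x ⬝ᵥ B *ᵥ x) := by
  have hBinv := hB.inv
  have h1 : B⁻¹ *ᵥ (B *ᵥ x) = x := by
    rw [mulVec_mulVec, hB.inv_mul', one_mulVec]
  have h2 : (B *ᵥ x) ⬝ᵥ (B⁻¹ *ᵥ (B *ᵥ x)) = x ⬝ᵥ B *ᵥ x := by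
    rw [h1, dotProduct_comm]
  have h3 : v ⬝ᵥ B⁻¹ *ᵥ (B *ᵥ x) = v ⬝ᵥ x := by rw [h1]
  have := psd_cauchy_schwarz hBinv.posSemidef v (B *ᵥ x)
  rw [h2, h3] at this
  exact this

lemma posDef_sub_vecMulVec {B : Matrix n n ℝ} (hB : B.PosDef) {w : ℝ} (hw : 0 ≤ w)
    {v : n → ℝ} (h : w * (v ⬝ᵥ B⁻¹ *ᵥ v) < 1) :
    (B - w • vecMulVec v v).PosDef := by
  rw [Matrix.posDef_iff_dotProduct_mulVec]; constructor
  · have h1 := hB.isHermitian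
    have h2 := (posSemidef_vecMulVec' v).isHermitian
    unfold Matrix.IsHermitian at *
    rw [conjTranspose_sub, conjTranspose_smul, h1, h2]
    simp
  · intro x hx
    have hBx : 0 < x ⬝ᵥ B *ᵥ x := by simpa using hB.dotProduct_mulVec_pos hx
    have hcs := dot_sq_le hB v x
    have hq : 0 ≤ v ⬝ᵥ B⁻¹ *ᵥ v := by simpa using hB.inv.posSemidef.dotProduct_mulVec_nonneg v
    have key : w * (v ⬝ᵥ x)^2 < x ⬝ᵥ B *ᵥ x := by
      calc w * (v ⬝ᵥ x)^2 ≤ w * ((v ⬝ᵥ B⁻¹ *ᵥ v) * (x ⬝ᵥ B *ᵥ x)) := by nlinarith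
        _ = (w * (v ⬝ᵥ B⁻¹ *ᵥ v)) * (x ⬝ᵥ B *ᵥ x) := by ring
        _ < 1 * (x ⬝ᵥ B *ᵥ x) := by nlinarith
        _ = x ⬝ᵥ B *ᵥ x := one_mul _
    have expand : x ⬝ᵥ (B - w • vecMulVec v v) *ᵥ x
        = x ⬝ᵥ B *ᵥ x - w * (v ⬝ᵥ x)^2 := by
      rw [sub_mulVec, dotProduct_sub, smul_mulVec, dotProduct_smul, dot_vecMulVec,
        smul_eq_mul]
    simpa [expand] using sub_pos.mpr key

/-- If `C` is posdef with `trace C⁻¹ < 1` then `C - 1` is posdef. -/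
lemma posDef_sub_one {C : Matrix n n ℝ} (hC : C.PosDef) (h : trace C⁻¹ < 1) :
    (C - 1).PosDef := by
  rw [Matrix.posDef_iff_dotProduct_mulVec]; constructor
  · have h1 := hC.isHermitian
    unfold Matrix.IsHermitian at *
    rw [conjTranspose_sub, h1]
    simp
  · intro x hx
    have hxx : 0 < x ⬝ᵥ x := by
      have hnn : 0 ≤ x ⬝ᵥ x := Finset.sum_nonneg fun i _ => mul_self_nonneg (x i)
      rcases lt_or_eq_of_le hnn with h' | h'
      · exact h'
      · exact absurd (dotProduct_self_eq_zero.mp h'.symm) hx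
    have hCx : 0 < x ⬝ᵥ C *ᵥ x := by simpa using hC.dotProduct_mulVec_pos hx
    have hcs : (x ⬝ᵥ x)^2 ≤ (x ⬝ᵥ C⁻¹ *ᵥ x) * (x ⬝ᵥ C *ᵥ x) := by
      have h1 : C *ᵥ (C⁻¹ *ᵥ x) = x := by rw [mulVec_mulVec, hC.mul_inv', one_mulVec]
      have := psd_cauchy_schwarz hC.posSemidef x (C⁻¹ *ᵥ x)
      rw [h1, dotProduct_comm (C⁻¹ *ᵥ x) x, mul_comm] at this
      exact this
    have htr : x ⬝ᵥ C⁻¹ *ᵥ x < x ⬝ᵥ x := by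
      have := quad_le_trace hC.inv.posSemidef x
      nlinarith
    have hfin : x ⬝ᵥ x < x ⬝ᵥ C *ᵥ x := by nlinarith
    have expand : x ⬝ᵥ (C - 1) *ᵥ x = x ⬝ᵥ C *ᵥ x - x ⬝ᵥ x := by
      rw [sub_mulVec, dotProduct_sub, one_mulVec]
    simpa [expand] using sub_pos.mpr hfin

lemma trace_inv_add_vecMulVec {B : Matrix n n ℝ} (hB : B.PosDef) (a : ℝ) (v : n → ℝ)
    (h : 1 + a * (v ⬝ᵥ B⁻¹ *ᵥ v) ≠ 0) :
    trace ((B + a • vecMulVec v v)⁻¹) =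
      trace B⁻¹ - (a / (1 + a * (v ⬝ᵥ B⁻¹ *ᵥ v))) * (v ⬝ᵥ (B⁻¹ * B⁻¹) *ᵥ v) := by
  rw [sherman_morrison hB a v h, trace_sub, trace_smul, smul_eq_mul]
  congr 2
  rw [trace_mul_cycle (B⁻¹) (vecMulVec v v) (B⁻¹), trace_mul_vecMulVec]

lemma posSemidef_smul_one {δ : ℝ} (hδ : 0 ≤ δ) : (δ • (1 : Matrix n n ℝ)).PosSemidef := by
  rw [Matrix.posSemidef_iff_dotProduct_mulVec]; constructor
  · unfold Matrix.IsHermitian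
    rw [conjTranspose_smul, conjTranspose_one]
    simp
  · intro x
    have : x ⬝ᵥ (δ • (1 : Matrix n n ℝ)) *ᵥ x = δ * (x ⬝ᵥ x) := by
      rw [smul_mulVec, dotProduct_smul, one_mulVec, smul_eq_mul]
    rw [star_trivial, this]
    exact mul_nonneg hδ (Finset.sum_nonneg fun i _ => mul_self_nonneg (x i))

lemma posDef_smul_one {δ : ℝ} (hδ : 0 < δ) : (δ • (1 : Matrix n n ℝ)).PosDef := by
  refine Matrix.PosDef.of_dotProduct_mulVec_pos (posSemidef_smul_one hδ.le).1 fun x hx => ?_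
  have : x ⬝ᵥ (δ • (1 : Matrix n n ℝ)) *ᵥ x = δ * (x ⬝ᵥ x) := by
    rw [smul_mulVec, dotProduct_smul, one_mulVec, smul_eq_mul]
  rw [star_trivial, this]
  have hxx : 0 < x ⬝ᵥ x := by
    have hnn : 0 ≤ x ⬝ᵥ x := Finset.sum_nonneg fun i _ => mul_self_nonneg (x i)
    rcases lt_or_eq_of_le hnn with h' | h'
    · exact h'
    · exact absurd (dotProduct_self_eq_zero.mp h'.symm) hx
  positivity

lemma inv_sub_inv_shift {B : Matrix n n ℝ} (hB : B.PosDef) {δ : ℝ} (hδ : 0 < δ) :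
    B⁻¹ - (B + δ • 1)⁻¹ = δ • (B⁻¹ * (B + δ • 1)⁻¹) := by
  have hB' : (B + δ • (1 : Matrix n n ℝ)).PosDef := hB.add_posSemidef (posSemidef_smul_one hδ.le)
  set B' := B + δ • (1 : Matrix n n ℝ) with hB'def
  have e1 : B⁻¹ * (B' * B'⁻¹) = B⁻¹ := by rw [hB'.mul_inv', Matrix.mul_one]
  have e2 : (B⁻¹ * B) * B'⁻¹ = B'⁻¹ := by rw [hB.inv_mul', Matrix.one_mul]
  have hdiff : B' - B = δ • (1 : Matrix n n ℝ) := by rw [hB'def]; abel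
  calc B⁻¹ - B'⁻¹ = B⁻¹ * B' * B'⁻¹ - B⁻¹ * B * B'⁻¹ := by
        rw [Matrix.mul_assoc, e1, e2]
    _ = B⁻¹ * (B' - B) * B'⁻¹ := by rw [Matrix.mul_sub, Matrix.sub_mul]
    _ = δ • (B⁻¹ * B'⁻¹) := by
        rw [hdiff, Matrix.mul_smul, Matrix.mul_one, Matrix.smul_mul]

lemma trace_sandwich_nonneg {M X : Matrix n n ℝ} (hM : M.PosSemidef) (hX : X.IsHermitian) :
    0 ≤ trace (X * M * X) := by
  have := hM.mul_mul_conjTranspose_same X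
  rw [hX.eq] at this
  exact this.trace_nonneg'

lemma trace_mul_self_pos [Nonempty n] {M : Matrix n n ℝ} (hsym : M.IsHermitian) (hM : M ≠ 0) :
    0 < trace (M * M) := by
  have htr : trace (M * M) = ∑ i, ∑ j, (M i j)^2 := by
    simp only [trace, diag, Matrix.mul_apply, sq]
    congr 1; ext i; congr 1; ext j
    congr 1
    have h2 : M i j = M j i := by
      have := congrFun (congrFun hsym.symm i) j
      simpa using this
    exact h2.symm
  rw [htr]
  obtain ⟨i, j, hij⟩ : ∃ i j, M i j ≠ 0 := by
    by_contra hc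
    push_neg at hc
    exact hM (by ext i j; simpa using hc i j)
  have hpos : 0 < ∑ j', (M i j')^2 :=
    Finset.sum_pos' (fun _ _ => sq_nonneg _) ⟨j, Finset.mem_univ j, by positivity⟩
  refine Finset.sum_pos' (fun _ _ => Finset.sum_nonneg fun _ _ => sq_nonneg _) ⟨i, Finset.mem_univ i, hpos⟩

lemma inv_ne_zero_of_posDef [Nonempty n] {B : Matrix n n ℝ} (hB : B.PosDef) : B⁻¹ ≠ 0 := by
  intro hc
  have := hB.inv_mul'
  rw [hc, Matrix.zero_mul] at this
  have := congrFun (congrFun this (Classical.arbitrary n)) (Classical.arbitrary n)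
  simp at this

lemma shift_trace_eq {P : Matrix n n ℝ} (hP : P.PosDef) {δ : ℝ} (hδ : 0 < δ) :
    trace P⁻¹ - trace (P + δ • 1)⁻¹ = δ * trace (P⁻¹ * (P + δ • 1)⁻¹) := by
  have h := inv_sub_inv_shift hP hδ
  have := congrArg Matrix.trace h
  rwa [trace_sub, trace_smul, smul_eq_mul] at this

lemma shift_trace_le {P : Matrix n n ℝ} (hP : P.PosDef) {δ : ℝ} (hδ : 0 < δ) :
    trace ((P + δ • 1)⁻¹ * (P + δ • 1)⁻¹) ≤ trace (P⁻¹ * (P + δ • 1)⁻¹) := by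
  have hP' : (P + δ • (1 : Matrix n n ℝ)).PosDef := hP.add_posSemidef (posSemidef_smul_one hδ.le)
  set P' := P + δ • (1 : Matrix n n ℝ) with hP'def
  have h := inv_sub_inv_shift hP hδ
  have h2 : P⁻¹ * P'⁻¹ - P'⁻¹ * P'⁻¹ = δ • (P⁻¹ * P'⁻¹ * P'⁻¹) := by
    calc P⁻¹ * P'⁻¹ - P'⁻¹ * P'⁻¹ = (P⁻¹ - P'⁻¹) * P'⁻¹ := by rw [Matrix.sub_mul]
      _ = δ • (P⁻¹ * P'⁻¹ * P'⁻¹) := by rw [h, Matrix.smul_mul]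
  have h3 : 0 ≤ trace (P⁻¹ * P'⁻¹ * P'⁻¹) := by
    have hc : trace (P⁻¹ * P'⁻¹ * P'⁻¹) = trace (P'⁻¹ * P⁻¹ * P'⁻¹) := by
      rw [trace_mul_cycle]
    rw [hc]
    exact trace_sandwich_nonneg hP.inv.posSemidef hP'.inv.isHermitian
  have := congrArg Matrix.trace h2
  rw [trace_sub, trace_smul, smul_eq_mul] at this
  nlinarith

lemma upper_est [Nonempty n] {B : Matrix n n ℝ} (hB : B.PosDef) {δ : ℝ} (hδ : 0 < δ) :
    0 < trace B⁻¹ - trace (B + δ • 1)⁻¹ ∧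
    trace ((B + δ • 1)⁻¹ * (B + δ • 1)⁻¹) / (trace B⁻¹ - trace (B + δ • 1)⁻¹) ≤ 1 / δ ∧
    trace (B + δ • 1)⁻¹ ≤ trace B⁻¹ := by
  have hB' : (B + δ • (1 : Matrix n n ℝ)).PosDef := hB.add_posSemidef (posSemidef_smul_one hδ.le)
  set B' := B + δ • (1 : Matrix n n ℝ) with hB'def
  have hT2 : 0 < trace (B'⁻¹ * B'⁻¹) :=
    trace_mul_self_pos hB'.inv.isHermitian (inv_ne_zero_of_posDef hB')
  have heq := shift_trace_eq hB hδ
  have hle := shift_trace_le hB hδ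
  rw [← hB'def] at heq hle
  have hD : 0 < trace B⁻¹ - trace B'⁻¹ := by
    rw [heq]
    have : trace (B'⁻¹ * B'⁻¹) ≤ trace (B⁻¹ * B'⁻¹) := hle
    nlinarith
  refine ⟨hD, ?_, by linarith⟩
  rw [div_le_div_iff₀ hD hδ]
  rw [heq]
  have h1 : trace (B'⁻¹ * B'⁻¹) ≤ trace (B⁻¹ * B'⁻¹) := hle
  nlinarith

lemma lower_est [Nonempty n] {C' : Matrix n n ℝ} (hC' : C'.PosDef) {k : ℝ}
    (hΦ : trace (C' + (1:ℝ) • 1)⁻¹ ≤ k) (hk1 : k ≤ 1) :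
    0 < trace C'⁻¹ - trace (C' + (1:ℝ) • 1)⁻¹ ∧
    1 - k ≤ trace (C'⁻¹ * C'⁻¹) / (trace C'⁻¹ - trace (C' + (1:ℝ) • 1)⁻¹) - trace C'⁻¹ := by
  have hone : (0:ℝ) < 1 := one_pos
  have hC : (C' + (1:ℝ) • (1 : Matrix n n ℝ)).PosDef :=
    hC'.add_posSemidef (posSemidef_smul_one hone.le)
  set C := C' + (1:ℝ) • (1 : Matrix n n ℝ) with hCdef
  set S := trace (C'⁻¹ * C⁻¹) with hS
  set T := trace (C'⁻¹ * C'⁻¹ * C⁻¹) with hT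
  set Φ := trace C⁻¹ with hΦdef
  -- gap equality
  have heq : trace C'⁻¹ - trace C⁻¹ = S := by
    have := shift_trace_eq hC' hone
    rw [← hCdef] at this
    simpa using this
  -- S positive
  have hSpos : 0 < S := by
    have hle := shift_trace_le hC' hone
    rw [← hCdef] at hle
    have hpos : 0 < trace (C⁻¹ * C⁻¹) :=
      trace_mul_self_pos hC.inv.isHermitian (inv_ne_zero_of_posDef hC)
    -- trace (C⁻¹ * C⁻¹) ≤ trace (C'⁻¹ * C⁻¹) = S
    exact lt_of_lt_of_le hpos hle
  -- trace C'⁻² = S + T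
  have hsq : trace (C'⁻¹ * C'⁻¹) = S + T := by
    have h := inv_sub_inv_shift hC' hone
    rw [← hCdef] at h
    have h2 : C'⁻¹ * C'⁻¹ - C'⁻¹ * C⁻¹ = (1:ℝ) • (C'⁻¹ * (C'⁻¹ * C⁻¹)) := by
      calc C'⁻¹ * C'⁻¹ - C'⁻¹ * C⁻¹ = C'⁻¹ * (C'⁻¹ - C⁻¹) := by rw [Matrix.mul_sub]
        _ = (1:ℝ) • (C'⁻¹ * (C'⁻¹ * C⁻¹)) := by rw [h, Matrix.mul_smul]
    have := congrArg Matrix.trace h2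
    rw [trace_sub, trace_smul, smul_eq_mul, one_mul] at this
    have hassoc : C'⁻¹ * (C'⁻¹ * C⁻¹) = C'⁻¹ * C'⁻¹ * C⁻¹ := by rw [Matrix.mul_assoc]
    rw [hassoc] at this
    linarith [this]
  -- T nonneg
  have hTnn : 0 ≤ T := by
    have hc : trace (C'⁻¹ * C'⁻¹ * C⁻¹) = trace (C'⁻¹ * C⁻¹ * C'⁻¹) := by
      rw [trace_mul_cycle C'⁻¹ C'⁻¹ C⁻¹, trace_mul_cycle C⁻¹ C'⁻¹ C'⁻¹]
    rw [hT, hc]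
    exact trace_sandwich_nonneg hC.inv.posSemidef hC'.inv.isHermitian
  -- Φ positive, ≤ k
  have hΦpos : 0 < Φ := hC.inv.trace_pos'
  -- Cauchy–Schwarz : S^2 ≤ T * Φ
  have hcs : S^2 ≤ T * Φ := by
    set R := hC.inv.posSemidef.sqrt with hR
    have hRsym : Rᵀ = R := by
      have h := hC.inv.posSemidef.posSemidef_sqrt.isHermitian
      rw [← conjTranspose_eq_transpose_of_trivial]
      exact h
    have hRR : R * R = C⁻¹ := hC.inv.posSemidef.sqrt_mul_self
    have hXform : S = trace ((C'⁻¹ * R) * R) := by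
      rw [hS, ← hRR, Matrix.mul_assoc]
    have hkey := trace_mul_sq_le (C'⁻¹ * R) R
    have hXXt : (C'⁻¹ * R) * (C'⁻¹ * R)ᵀ = C'⁻¹ * C⁻¹ * C'⁻¹ := by
      rw [Matrix.transpose_mul, hRsym]
      have hCt : (C'⁻¹)ᵀ = C'⁻¹ := by
        rw [← conjTranspose_eq_transpose_of_trivial]
        exact hC'.inv.isHermitian
      rw [hCt]
      calc C'⁻¹ * R * (R * C'⁻¹) = C'⁻¹ * (R * R) * C'⁻¹ := by
            simp only [Matrix.mul_assoc]
        _ = C'⁻¹ * C⁻¹ * C'⁻¹ := by rw [hRR]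
    have hYtY : Rᵀ * R = C⁻¹ := by rw [hRsym, hRR]
    rw [hXXt, hYtY, ← hXform] at hkey
    have hc2 : trace (C'⁻¹ * C⁻¹ * C'⁻¹) = T :=
      (trace_mul_cycle C'⁻¹ C⁻¹ C'⁻¹).trans hT.symm
    rw [hc2] at hkey
    exact hkey
  have hΦk : Φ ≤ k := hΦ
  -- conclude
  refine ⟨by rw [heq]; exact hSpos, ?_⟩
  rw [heq, hsq]
  -- goal : 1 - k ≤ (S + T)/S - trace C'⁻¹,  trace C'⁻¹ = Φ + S
  have htrC' : trace C'⁻¹ = Φ + S := by linarith [heq]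
  rw [htrC']
  have hTS : S ≤ T / S := by
    rw [le_div_iff₀ hSpos]
    nlinarith
  have hexp : (S + T)/S = 1 + T/S := by field_simp
  rw [hexp]
  have : T/S ≥ S := hTS
  nlinarith

lemma Matrix.IsHermitian.vecMul_eq' {M : Matrix n n ℝ} (hM : M.IsHermitian) (x : n → ℝ) :
    x ᵥ* M = M *ᵥ x := by
  have ht : Mᵀ = M := by
    rw [← conjTranspose_eq_transpose_of_trivial]
    exact hM.eq
  conv_lhs => rw [← ht]
  rw [vecMul_transpose]

lemma quad_sq_eq {M : Matrix n n ℝ} (hM : M.IsHermitian) (x : n → ℝ) :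
    x ⬝ᵥ (M * M) *ᵥ x = (M *ᵥ x) ⬝ᵥ (M *ᵥ x) := by
  rw [← mulVec_mulVec, dotProduct_mulVec, hM.vecMul_eq']

lemma posSemidef_smul' {M : Matrix n n ℝ} (hM : M.PosSemidef) {c : ℝ} (hc : 0 ≤ c) :
    (c • M).PosSemidef := by
  rw [Matrix.posSemidef_iff_dotProduct_mulVec]; constructor
  · unfold Matrix.IsHermitian
    rw [conjTranspose_smul, hM.1.eq]
    simp
  · intro x
    have : x ⬝ᵥ (c • M) *ᵥ x = c * (x ⬝ᵥ M *ᵥ x) := by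
      rw [smul_mulVec, dotProduct_smul, smul_eq_mul]
    rw [star_trivial, this]
    exact mul_nonneg hc (by simpa using hM.dotProduct_mulVec_nonneg x)

lemma sum_vecMulVec {d : ℕ} (U : Matrix (Fin d) n ℝ) :
    ∑ i, vecMulVec (U i) (U i) = Uᵀ * U := by
  ext a b
  rw [Matrix.sum_apply, Matrix.mul_apply]
  exact Finset.sum_congr rfl fun i _ => by
    rw [vecMulVec_apply, transpose_apply, mul_comm]

lemma sum_quad {d : ℕ} (U : Matrix (Fin d) n ℝ) (hU : Uᵀ * U = 1) (M : Matrix n n ℝ) :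
    ∑ i, (U i ⬝ᵥ M *ᵥ U i) = trace M := by
  have h1 : ∀ i : Fin d, U i ⬝ᵥ M *ᵥ U i = trace (M * vecMulVec (U i) (U i)) :=
    fun i => (trace_mul_vecMulVec M (U i) (U i)).symm
  calc ∑ i, (U i ⬝ᵥ M *ᵥ U i) = ∑ i, trace (M * vecMulVec (U i) (U i)) := by
        exact Finset.sum_congr rfl fun i _ => h1 i
    _ = trace (M * ∑ i, vecMulVec (U i) (U i)) := by
        rw [Matrix.mul_sum, trace_sum]
    _ = trace M := by rw [sum_vecMulVec, hU, Matrix.mul_one]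

lemma chooser {d : ℕ} (Uf Lf : Fin d → ℝ) (hUnn : ∀ i, 0 ≤ Uf i)
    (hsum : ∑ i, Uf i ≤ ∑ i, Lf i) (hpos : 0 < ∑ i, Lf i) :
    ∃ i, Uf i ≤ Lf i ∧ 0 < Lf i := by
  by_contra hc
  push_neg at hc
  have hall : ∀ i, Lf i ≤ Uf i := by
    intro i
    rcases le_or_gt (Uf i) (Lf i) with h | h
    · exact (hc i h).trans (hUnn i)
    · exact h.le
  obtain ⟨i0, hi0⟩ : ∃ i, 0 < Lf i := by
    by_contra h2
    push_neg at h2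
    exact absurd hpos (not_lt.mpr (Finset.sum_nonpos fun i _ => h2 i))
  have hstrict : Lf i0 < Uf i0 := by
    rcases le_or_gt (Uf i0) (Lf i0) with h | h
    · exact absurd hi0 (not_lt.mpr (hc i0 h))
    · exact h
  have : ∑ i, Lf i < ∑ i, Uf i :=
    Finset.sum_lt_sum (fun i _ => hall i) ⟨i0, Finset.mem_univ _, hstrict⟩
  linarith

lemma bss_step [Nonempty n] {d : ℕ} (U : Matrix (Fin d) n ℝ) (hU : Uᵀ * U = 1)
    {k : ℝ} (hk0 : 0 < k) (hk1 : k < 1)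
    (A : Matrix n n ℝ) (u l : ℝ)
    (hBu : (u • 1 - A).PosDef)
    (hCl : (A - l • 1).PosDef)
    (hTu : trace ((u • 1 - A)⁻¹) ≤ k * (1 - k) / (1 + k))
    (hTl : trace ((A - l • 1)⁻¹) ≤ k) :
    ∃ (i : Fin d) (w : ℝ), 0 < w ∧
      ((u + (1 + k) / (1 - k)) • 1 - (A + w • vecMulVec (U i) (U i))).PosDef ∧
      ((A + w • vecMulVec (U i) (U i)) - (l + 1) • 1).PosDef ∧
      trace (((u + (1 + k) / (1 - k)) • 1 - (A + w • vecMulVec (U i) (U i)))⁻¹)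
        ≤ k * (1 - k) / (1 + k) ∧
      trace (((A + w • vecMulVec (U i) (U i)) - (l + 1) • 1)⁻¹) ≤ k := by
  have hk1' : (0:ℝ) < 1 - k := by linarith
  have hk1'' : (0:ℝ) < 1 + k := by linarith
  set δ : ℝ := (1 + k) / (1 - k) with hδdef
  have hδpos : 0 < δ := div_pos hk1'' hk1'
  set B : Matrix n n ℝ := u • 1 - A with hBdef
  set B' : Matrix n n ℝ := B + δ • 1 with hB'def
  have hB' : B'.PosDef := hBu.add_posSemidef (posSemidef_smul_one hδpos.le)
  have hBB' : (u + δ) • (1 : Matrix n n ℝ) - A = B' := by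
    rw [hB'def, hBdef]
    module
  set C : Matrix n n ℝ := A - l • 1 with hCdef
  set C' : Matrix n n ℝ := A - (l + 1) • 1 with hC'def
  have hCC' : C' + (1:ℝ) • (1 : Matrix n n ℝ)  = C := by
    rw [hCdef, hC'def]
    module
  have hC'C : C' = C - 1 := by
    rw [hCdef, hC'def]
    module
  have hC' : C'.PosDef := by
    rw [hC'C]
    exact posDef_sub_one hCl (lt_of_le_of_lt hTl hk1)
  -- upper estimates
  obtain ⟨hD, hratio, hmono⟩ := upper_est hBu hδpos
  rw [← hB'def] at hD hratio hmono
  set D : ℝ := trace B⁻¹ - trace B'⁻¹ with hDdef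
  -- lower estimates
  have hΦC : trace (C' + (1:ℝ) • 1)⁻¹ ≤ k := by rw [hCC']; exact hTl
  obtain ⟨hD', hLbound⟩ := lower_est hC' hΦC hk1.le
  rw [hCC'] at hD' hLbound
  set D' : ℝ := trace C'⁻¹ - trace C⁻¹ with hD'def
  -- the two selection functions
  set Uf : Fin d → ℝ := fun i =>
    (U i ⬝ᵥ (B'⁻¹ * B'⁻¹) *ᵥ U i) / D + (U i ⬝ᵥ B'⁻¹ *ᵥ U i) with hUfdef
  set Lf : Fin d → ℝ := fun i =>
    (U i ⬝ᵥ (C'⁻¹ * C'⁻¹) *ᵥ U i) / D' - (U i ⬝ᵥ C'⁻¹ *ᵥ U i) with hLfdef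
  have hB'invsq : (B'⁻¹ * B'⁻¹).PosSemidef := by
    have := Matrix.PosSemidef.one.mul_mul_conjTranspose_same (B'⁻¹)
    rwa [Matrix.mul_one, hB'.inv.isHermitian.eq] at this
  have hC'invsq : (C'⁻¹ * C'⁻¹).PosSemidef := by
    have := Matrix.PosSemidef.one.mul_mul_conjTranspose_same (C'⁻¹)
    rwa [Matrix.mul_one, hC'.inv.isHermitian.eq] at this
  have hUfnn : ∀ i, 0 ≤ Uf i := by
    intro i
    have h1 : 0 ≤ U i ⬝ᵥ (B'⁻¹ * B'⁻¹) *ᵥ U i := by simpa using hB'invsq.dotProduct_mulVec_nonneg (U i)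
    have h2 : 0 ≤ U i ⬝ᵥ B'⁻¹ *ᵥ U i := by simpa using hB'.inv.posSemidef.dotProduct_mulVec_nonneg (U i)
    have h3 : 0 ≤ (U i ⬝ᵥ (B'⁻¹ * B'⁻¹) *ᵥ U i) / D := div_nonneg h1 hD.le
    simp only [hUfdef]
    linarith
  have hsumU : ∑ i, Uf i ≤ 1 - k := by
    have h1 : ∑ i, Uf i = trace (B'⁻¹ * B'⁻¹) / D + trace B'⁻¹ := by
      simp only [hUfdef]
      rw [Finset.sum_add_distrib, ← Finset.sum_div, sum_quad U hU, sum_quad U hU]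
    have h2 : trace B'⁻¹ ≤ k * (1 - k) / (1 + k) := le_trans hmono hTu
    have h3 : (1:ℝ) / δ = (1 - k) / (1 + k) := by
      rw [hδdef, one_div_div]
    rw [h1]
    have h4 : trace (B'⁻¹ * B'⁻¹) / D ≤ (1 - k) / (1 + k) := by rw [← h3]; exact hratio
    have h5 : (1 - k) / (1 + k) + k * (1 - k) / (1 + k) = 1 - k := by
      field_simp
    linarith
  have hsumL : 1 - k ≤ ∑ i, Lf i := by
    have h1 : ∑ i, Lf i = trace (C'⁻¹ * C'⁻¹) / D' - trace C'⁻¹ := by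
      simp only [hLfdef]
      rw [Finset.sum_sub_distrib, ← Finset.sum_div, sum_quad U hU, sum_quad U hU]
    rw [h1]
    exact hLbound
  have hLpos : 0 < ∑ i, Lf i := lt_of_lt_of_le (by linarith) hsumL
  obtain ⟨i, hUL, hLi⟩ := chooser Uf Lf hUfnn (le_trans hsumU hsumL) hLpos
  -- abbreviations for the chosen index
  set v : n → ℝ := U i with hvdef
  set P : ℝ := v ⬝ᵥ (B'⁻¹ * B'⁻¹) *ᵥ v with hPdef
  set p : ℝ := v ⬝ᵥ B'⁻¹ *ᵥ v with hpdef
  set Mq : ℝ := v ⬝ᵥ (C'⁻¹ * C'⁻¹) *ᵥ v with hMqdef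
  set m : ℝ := v ⬝ᵥ C'⁻¹ *ᵥ v with hmdef
  have hUfi : Uf i = P / D + p := rfl
  have hLfi : Lf i = Mq / D' - m := rfl
  have hpnn : 0 ≤ p := by simpa using hB'.inv.posSemidef.dotProduct_mulVec_nonneg v
  have hmnn : 0 ≤ m := by simpa using hC'.inv.posSemidef.dotProduct_mulVec_nonneg v
  have hPnn : 0 ≤ P := by simpa using hB'invsq.dotProduct_mulVec_nonneg v
  have hPpos : 0 < P := by
    rcases lt_or_eq_of_le hPnn with h | h
    · exact h
    · exfalso
      have hBv : B'⁻¹ *ᵥ v = 0 := by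
        have hq := quad_sq_eq hB'.inv.isHermitian v
        have h0 : (B'⁻¹ *ᵥ v) ⬝ᵥ (B'⁻¹ *ᵥ v) = 0 := by
          rw [← hq, ← hPdef, ← h]
        exact dotProduct_self_eq_zero.mp h0
      have hv0 : v = 0 := by
        have : B' *ᵥ (B'⁻¹ *ᵥ v) = v := by
          rw [mulVec_mulVec, hB'.mul_inv', one_mulVec]
        rw [hBv, mulVec_zero] at this
        exact this.symm
      have : Lf i = 0 := by
        rw [hLfi, hMqdef, hmdef, hv0]
        simp
      rw [this] at hLi
      exact lt_irrefl 0 hLi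
  set w : ℝ := (Lf i)⁻¹ with hwdef
  have hwpos : 0 < w := inv_pos.mpr hLi
  have hwL : w * Lf i = 1 := inv_mul_cancel₀ (ne_of_gt hLi)
  have hUp : p < Uf i := by
    rw [hUfi]
    have : 0 < P / D := div_pos hPpos hD
    linarith
  have hwp : w * p < 1 := by
    calc w * p < w * Uf i := by exact (mul_lt_mul_iff_right₀ hwpos).mpr hUp
      _ ≤ w * Lf i := by exact (mul_le_mul_iff_right₀ hwpos).mpr hUL
      _ = 1 := hwL
  have hshape1 : (u + δ) • (1 : Matrix n n ℝ) - (A + w • vecMulVec v v)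
      = B' - w • vecMulVec v v := by
    rw [← hBB']
    abel
  have hshape2 : (A + w • vecMulVec v v) - (l + 1) • (1 : Matrix n n ℝ)
      = C' + w • vecMulVec v v := by
    rw [hC'def]
    abel
  have h1wp : 0 < 1 - w * p := by linarith
  have hDne : D ≠ 0 := ne_of_gt hD
  have hD'ne : D' ≠ 0 := ne_of_gt hD'
  -- upper trace bound
  have hneg : B' + (-w) • vecMulVec v v = B' - w • vecMulVec v v := by
    rw [neg_smul, ← sub_eq_add_neg]
  have hneU : 1 + (-w) * p ≠ 0 := by
    have : 1 + (-w) * p = 1 - w * p := by ring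
    rw [this]
    exact ne_of_gt h1wp
  have hSMU := trace_inv_add_vecMulVec hB' (-w) v hneU
  rw [hneg, ← hPdef, ← hpdef] at hSMU
  have hSMU' : trace ((B' - w • vecMulVec v v)⁻¹)
      = trace B'⁻¹ + (w * P) / (1 - w * p) := by
    rw [hSMU]
    have : (-w) / (1 + (-w) * p) = -(w / (1 - w * p)) := by
      rw [neg_div]
      congr 2
      ring
    rw [this]
    field_simp
    ring
  have hkeyU : w * P ≤ D * (1 - w * p) := by
    have hULi' : P / D + p ≤ Lf i := by rw [← hUfi]; exact hUL
    have h2 : w * (P / D + p) ≤ w * Lf i := mul_le_mul_of_nonneg_left hULi' hwpos.le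
    rw [hwL] at h2
    have h2' : w * (P / D + p) = w * (P / D) + w * p := by ring
    have h3 : w * (P / D) ≤ 1 - w * p := by linarith
    have h4 : D * (w * (P / D)) ≤ D * (1 - w * p) := mul_le_mul_of_nonneg_left h3 hD.le
    have h5 : D * (w * (P / D)) = w * P := by field_simp
    calc w * P = D * (w * (P / D)) := h5.symm
      _ ≤ D * (1 - w * p) := h4
  have hupperTr : trace ((B' - w • vecMulVec v v)⁻¹) ≤ k * (1 - k) / (1 + k) := by
    rw [hSMU']
    have h6 : (w * P) / (1 - w * p) ≤ D := by
      rw [div_le_iff₀ h1wp]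
      linarith [hkeyU]
    have h7 : trace B⁻¹ ≤ k * (1 - k) / (1 + k) := hTu
    have h8 : trace B'⁻¹ + D = trace B⁻¹ := by rw [hDdef]; ring
    linarith
  -- lower trace bound
  have h1wm : 0 < 1 + w * m := by have := mul_nonneg hwpos.le hmnn; linarith
  have hneL : 1 + w * m ≠ 0 := ne_of_gt h1wm
  have hSML := trace_inv_add_vecMulVec hC' w v hneL
  rw [← hMqdef, ← hmdef] at hSML
  have hI : w * Mq = D' * (1 + w * m) := by
    have h1 : w * (Mq / D' - m) = 1 := by rw [← hLfi]; exact hwL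
    field_simp at h1
    linarith [h1]
  have hlowerTr : trace ((C' + w • vecMulVec v v)⁻¹) ≤ k := by
    rw [hSML]
    have h2 : (w / (1 + w * m)) * Mq = D' := by
      rw [div_mul_eq_mul_div, hI]
      exact mul_div_cancel_right₀ D' hneL
    rw [h2]
    have h3 : trace C'⁻¹ - D' = trace C⁻¹ := by rw [hD'def]; ring
    rw [h3]
    exact hTl
  refine ⟨i, w, hwpos, ?_, ?_, ?_, ?_⟩
  · rw [hshape1]
    exact posDef_sub_vecMulVec hB' hwpos.le hwp
  · rw [hshape2]
    exact hC'.add_posSemidef (posSemidef_smul' (posSemidef_vecMulVec' v) hwpos.le)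
  · rw [hshape1]
    exact hupperTr
  · rw [hshape2]
    exact hlowerTr

lemma dotProduct_self_pos {x : n → ℝ} (hx : x ≠ 0) : 0 < x ⬝ᵥ x := by
  have hnn : 0 ≤ x ⬝ᵥ x := Finset.sum_nonneg fun i _ => mul_self_nonneg (x i)
  rcases lt_or_eq_of_le hnn with h' | h'
  · exact h'
  · exact absurd (dotProduct_self_eq_zero.mp h'.symm) hx

lemma eig_lt {A : Matrix n n ℝ} {u : ℝ} (hu : (u • 1 - A).PosDef)
    {v : n → ℝ} {lam : ℝ} (hv : v ≠ 0) (hAv : A *ᵥ v = lam • v) : lam < u := by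
  have h := hu.dotProduct_mulVec_pos hv
  rw [star_trivial, sub_mulVec, smul_mulVec, one_mulVec, hAv, dotProduct_sub,
    dotProduct_smul, dotProduct_smul, smul_eq_mul, smul_eq_mul] at h
  have hvv : 0 < v ⬝ᵥ v := dotProduct_self_pos hv
  nlinarith

lemma eig_gt {A : Matrix n n ℝ} {l : ℝ} (hl : (A - l • 1).PosDef)
    {v : n → ℝ} {lam : ℝ} (hv : v ≠ 0) (hAv : A *ᵥ v = lam • v) : l < lam := by
  have h := hl.dotProduct_mulVec_pos hv
  rw [star_trivial, sub_mulVec, smul_mulVec, one_mulVec, hAv, dotProduct_sub,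
    dotProduct_smul, dotProduct_smul, smul_eq_mul, smul_eq_mul] at h
  have hvv : 0 < v ⬝ᵥ v := dotProduct_self_pos hv
  nlinarith

lemma trace_inv_smul_one {c : ℝ} (hc : c ≠ 0) :
    trace ((c • (1 : Matrix n n ℝ))⁻¹) = (Fintype.card n : ℝ) * c⁻¹ := by
  have hinv : (c • (1 : Matrix n n ℝ))⁻¹ = c⁻¹ • 1 := by
    apply Matrix.inv_eq_right_inv
    rw [Matrix.smul_mul, Matrix.mul_smul, Matrix.one_mul, smul_smul, mul_inv_cancel₀ hc,
      one_smul]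
  rw [hinv, trace_smul, smul_eq_mul, trace_one]
  ring

/-- BSS-weights sparsification lemma (Batson–Spielman–Srivastava, as formulated by
Boutsidis et al.): if `U` is a `d × t` real matrix with `Uᵀ U = I_t` and `t < r ≤ d`,
then there are nonnegative weights `s`, at most `r` of them nonzero, such that every
eigenvalue `lam` of `∑ i, s i • (u_i u_iᵀ)` satisfies
`(1 - √(t/r))² ≤ lam ≤ (1 + √(t/r))²`. -/
theorem bss_weights (d t : ℕ) (ht : 0 < t) (htd : t < d)
    (U : Matrix (Fin d) (Fin t) ℝ) (hU : Uᵀ * U = 1)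
    (r : ℕ) (hr₁ : t < r) (hr₂ : r ≤ d) :
    ∃ s : Fin d → ℝ,
      (∀ i, 0 ≤ s i) ∧
      (Finset.univ.filter (fun i => s i ≠ 0)).card ≤ r ∧
      (∀ (lam : ℝ) (v : Fin t → ℝ), v ≠ 0 →
        (∑ i, s i • Matrix.vecMulVec (U i) (U i)).mulVec v = lam • v →
        (1 - Real.sqrt ((t : ℝ) / r)) ^ 2 ≤ lam ∧
          lam ≤ (1 + Real.sqrt ((t : ℝ) / r)) ^ 2) := by
  haveI : Nonempty (Fin t) := Fin.pos_iff_nonempty.mp ht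
  set k : ℝ := Real.sqrt ((t : ℝ) / r) with hkdef
  have hr0 : (0:ℝ) < r := by
    have : 0 < r := lt_trans ht hr₁
    exact_mod_cast this
  have ht0 : (0:ℝ) < t := by exact_mod_cast ht
  have htr : (t:ℝ)/r < 1 := (div_lt_one hr0).mpr (by exact_mod_cast hr₁)
  have hk0 : 0 < k := Real.sqrt_pos.mpr (by positivity)
  have hk2 : k^2 = (t:ℝ)/r := Real.sq_sqrt (by positivity)
  have hk1 : k < 1 := by nlinarith
  have hk1' : (0:ℝ) < 1 - k := by linarith
  have hk1'' : (0:ℝ) < 1 + k := by linarith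
  have hteq : (t:ℝ) = r * k^2 := by rw [hk2]; field_simp
  set δ : ℝ := (1 + k)/(1 - k) with hδdef
  have hδ0 : 0 < δ := div_pos hk1'' hk1'
  set u0 : ℝ := (r*k)*δ with hu0def
  set l0 : ℝ := -(r*k) with hl0def
  have hu00 : 0 < u0 := by positivity
  set Inv : ℕ → Prop := fun τ => ∃ s : Fin d → ℝ, (∀ i, 0 ≤ s i) ∧
    (Finset.univ.filter (fun i => s i ≠ 0)).card ≤ τ ∧
    ((u0 + τ*δ) • 1 - ∑ i, s i • vecMulVec (U i) (U i)).PosDef ∧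
    ((∑ i, s i • vecMulVec (U i) (U i)) - (l0 + τ) • 1).PosDef ∧
    trace (((u0 + τ*δ) • 1 - ∑ i, s i • vecMulVec (U i) (U i))⁻¹) ≤ k*(1-k)/(1+k) ∧
    trace (((∑ i, s i • vecMulVec (U i) (U i)) - (l0 + τ) • 1)⁻¹) ≤ k with hInvdef
  have hbase : Inv 0 := by
    refine ⟨0, fun i => le_refl 0, by simp, ?_⟩
    simp only [Pi.zero_apply, zero_smul, Finset.sum_const_zero]
    have e1 : (u0 + (0:ℕ)*δ) • (1 : Matrix (Fin t) (Fin t) ℝ) - 0 = u0 • 1 := by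
      push_cast; rw [zero_mul, add_zero, sub_zero]
    have e2 : (0 : Matrix (Fin t) (Fin t) ℝ) - (l0 + (0:ℕ)) • 1 = (r*k) • 1 := by
      push_cast
      rw [add_zero, zero_sub, hl0def, neg_smul, neg_neg]
    rw [e1, e2]
    refine ⟨posDef_smul_one hu00, posDef_smul_one (by positivity), ?_, ?_⟩
    · rw [trace_inv_smul_one (ne_of_gt hu00)]
      have hcard : (Fintype.card (Fin t) : ℝ) = (t:ℝ) := by simp
      rw [hcard, hteq]
      refine le_of_eq ?_
      rw [hu0def, hδdef]
      field_simp
    · rw [trace_inv_smul_one (by positivity)]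
      have hcard : (Fintype.card (Fin t) : ℝ) = (t:ℝ) := by simp
      rw [hcard, hteq]
      refine le_of_eq ?_
      field_simp
  have hstep : ∀ τ : ℕ, Inv τ → Inv (τ+1) := by
    intro τ ⟨s, hs0, hcard, hPDu, hPDl, hTu, hTl⟩
    obtain ⟨i, w, hw, hPDu', hPDl', hTu', hTl'⟩ :=
      bss_step U hU hk0 hk1 (∑ j, s j • vecMulVec (U j) (U j)) (u0 + τ*δ) (l0 + τ)
        hPDu hPDl hTu hTl
    set s' : Fin d → ℝ := fun j => s j + if j = i then w else 0 with hs'def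
    have hA' : (∑ j, s' j • vecMulVec (U j) (U j))
        = (∑ j, s j • vecMulVec (U j) (U j)) + w • vecMulVec (U i) (U i) := by
      rw [hs'def]
      have : ∀ j, (s j + if j = i then w else 0) • vecMulVec (U j) (U j)
          = s j • vecMulVec (U j) (U j)
            + (if j = i then w • vecMulVec (U j) (U j) else 0) := by
        intro j
        by_cases hj : j = i <;> simp [hj, add_smul]
      rw [Finset.sum_congr rfl fun j _ => this j, Finset.sum_add_distrib,
        Finset.sum_ite_eq' Finset.univ i (fun j => w • vecMulVec (U j) (U j))]
      simp
    have hu' : u0 + ((τ+1 : ℕ):ℝ)*δ = (u0 + τ*δ) + δ := by push_cast; ring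
    have hl' : l0 + ((τ+1 : ℕ):ℝ) = (l0 + τ) + 1 := by push_cast; ring
    refine ⟨s', ?_, ?_, ?_, ?_, ?_, ?_⟩
    · intro j
      by_cases hj : j = i <;> simp [hs'def, hj]
      · linarith [hs0 i, hw]
      · exact hs0 j
    · have hsub : (Finset.univ.filter (fun j => s' j ≠ 0))
          ⊆ insert i (Finset.univ.filter (fun j => s j ≠ 0)) := by
        intro j hj
        rcases eq_or_ne j i with hji | hji
        · rw [hji]; exact Finset.mem_insert_self i _
        · apply Finset.mem_insert_of_mem
          simp only [Finset.mem_filter, Finset.mem_univ, true_and] at hj ⊢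
          simpa [hs'def, hji] using hj
      calc (Finset.univ.filter (fun j => s' j ≠ 0)).card
          ≤ (insert i (Finset.univ.filter (fun j => s j ≠ 0))).card :=
            Finset.card_le_card hsub
        _ ≤ (Finset.univ.filter (fun j => s j ≠ 0)).card + 1 := Finset.card_insert_le _ _
        _ ≤ τ + 1 := by omega
    · rw [hA', hu']; exact hPDu'
    · rw [hA', hl']; exact hPDl'
    · rw [hA', hu']; exact hTu'
    · rw [hA', hl']; exact hTl'
  have hInv : ∀ τ : ℕ, Inv τ := by
    intro τ
    induction τ with
    | zero => exact hbase
    | succ τ ih => exact hstep τ ih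
  obtain ⟨s, hs0, hcard, hPDu, hPDl, _, _⟩ := hInv r
  set c : ℝ := (1-k)/r with hcdef
  have hc0 : 0 < c := by positivity
  refine ⟨fun i => c * s i, fun i => mul_nonneg hc0.le (hs0 i), ?_, ?_⟩
  · have hfe : (Finset.univ.filter (fun i => c * s i ≠ 0))
        = Finset.univ.filter (fun i => s i ≠ 0) := by
      apply Finset.filter_congr
      intro i _
      simp [mul_ne_zero_iff, ne_of_gt hc0]
    rw [hfe]
    exact hcard
  · intro lam v hv hAv
    have hAeq : (∑ i, (c * s i) • vecMulVec (U i) (U i))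
        = c • ∑ i, s i • vecMulVec (U i) (U i) := by
      rw [Finset.smul_sum]
      exact Finset.sum_congr rfl fun i _ => by rw [smul_smul]
    rw [hAeq] at hAv
    set A : Matrix (Fin t) (Fin t) ℝ := ∑ i, s i • vecMulVec (U i) (U i) with hAdef
    have hAv' : A *ᵥ v = (lam / c) • v := by
      have h1 : c • (A *ᵥ v) = lam • v := by
        rw [← smul_mulVec]
        exact hAv
      have h2 : A *ᵥ v = c⁻¹ • (lam • v) := by
        rw [← h1, smul_smul, inv_mul_cancel₀ (ne_of_gt hc0), one_smul]
      rw [h2, smul_smul, div_eq_inv_mul]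
    have hlt : lam / c < u0 + r*δ := eig_lt hPDu hv hAv'
    have hgt : l0 + r < lam / c := eig_gt hPDl hv hAv'
    have hlam_l : c * (l0 + r) < lam := by
      have := mul_lt_mul_of_pos_left hgt hc0
      rwa [mul_div_cancel₀ lam (ne_of_gt hc0)] at this
    have hlam_u : lam < c * (u0 + r*δ) := by
      have := mul_lt_mul_of_pos_left hlt hc0
      rwa [mul_div_cancel₀ lam (ne_of_gt hc0)] at this
    have hlow : c * (l0 + r) = (1 - k)^2 := by
      rw [hcdef, hl0def]
      field_simp
      ring
    have hup : c * (u0 + r*δ) = (1 + k)^2 := by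
      rw [hcdef, hu0def, hδdef]
      field_simp
      ring
    constructor
    · calc (1 - k)^2 = c * (l0 + r) := hlow.symm
        _ ≤ lam := hlam_l.le
    · calc lam ≤ c * (u0 + r*δ) := hlam_u.le
        _ = (1+k)^2 := hup
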